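/- For $\alpha>2$ the series $\sum_{i,j}\frac{(i+j)^{2(1-\alpha)}(1+a^2(i+j)^2)^{(1-\alpha)s}}{i^4 j^4 (1+a^2 i^2)^{2s}(1+a^2 j^2)^{2s}}(\alpha_{j,i+j} + \alpha_{i,i+j})^2$ (the squared Hilbert-Schmidt norm of the second derivative $\nabla^2 B$, which is constant in $\varphi$) converges. -/

import Mathlib

noncomputable section

open scoped Real

/-- squared Euclidean norm `|k|² = k₁² + k₂²` of a lattice point. -/
def latSq (k : ℤ × ℤ) : ℝ := (k.1 : ℝ) ^ 2 + (k.2 : ℝ) ^ 2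

/-- `k > 0` for lattice points: `k₁ > 0`, or `k₁ = 0` and `k₂ > 0`. -/
def PosMode (k : ℤ × ℤ) : Prop := 0 < k.1 ∨ (k.1 = 0 ∧ 0 < k.2)

/-- `h^⊥ = (-h₂, h₁)`. -/
def perp (h : ℤ × ℤ) : ℤ × ℤ := (-h.2, h.1)

/-- Euclidean dot product of lattice points. -/
def ldot (h k : ℤ × ℤ) : ℝ := ((h.1 * k.1 + h.2 * k.2 : ℤ) : ℝ)

/-- The averaged-Euler interaction coefficients
`α_{h,k} = (1/2π)[(h^⊥·k)(h·k)/k² - (h^⊥·k)/2] (1+a²(k-h)²)^s/(1+a²k²)^s`. -/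
def acoef (a s : ℝ) (h k : ℤ × ℤ) : ℝ :=
  (1 / (2 * π)) * (ldot (perp h) k * ldot h k / latSq k - ldot (perp h) k / 2) *
    (1 + a ^ 2 * latSq (k - h)) ^ s / (1 + a ^ 2 * latSq k) ^ s

/-! ### Elementary facts about `latSq`, `ldot`, `perp` -/

lemma latSq_nonneg (m : ℤ × ℤ) : 0 ≤ latSq m := by unfold latSq; positivity

lemma one_le_latSq {m : ℤ × ℤ} (hm : m ≠ 0) : 1 ≤ latSq m := by
  have h : m.1 ≠ 0 ∨ m.2 ≠ 0 := by
    by_contra h; push_neg at h; exact hm (Prod.ext h.1 h.2)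
  unfold latSq
  rcases h with h | h
  · have h1 : (1:ℤ) ≤ m.1 ^ 2 := by rcases h.lt_or_gt with h | h <;> nlinarith
    have h2 : (1:ℝ) ≤ (m.1:ℝ) ^ 2 := by exact_mod_cast h1
    nlinarith [sq_nonneg (m.2:ℝ)]
  · have h1 : (1:ℤ) ≤ m.2 ^ 2 := by rcases h.lt_or_gt with h | h <;> nlinarith
    have h2 : (1:ℝ) ≤ (m.2:ℝ) ^ 2 := by exact_mod_cast h1
    nlinarith [sq_nonneg (m.1:ℝ)]

lemma ldot_sq_le (m n : ℤ × ℤ) : (ldot m n) ^ 2 ≤ latSq m * latSq n := by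
  unfold ldot latSq
  push_cast
  nlinarith [sq_nonneg ((m.1:ℝ) * (n.2:ℝ) - (m.2:ℝ) * (n.1:ℝ))]

lemma posMode_ne_zero {k : ℤ × ℤ} (h : PosMode k) : k ≠ 0 := by
  rintro rfl
  simp [PosMode] at h

lemma latSq_perp (j : ℤ × ℤ) : latSq (perp j) = latSq j := by
  simp only [latSq, perp]
  push_cast
  ring

lemma latSq_add (i j : ℤ × ℤ) : latSq (i + j) = latSq i + 2 * ldot i j + latSq j := by
  simp only [latSq, ldot, Prod.fst_add, Prod.snd_add]
  push_cast
  ring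

lemma ldot_perp_add_left (i j : ℤ × ℤ) : ldot (perp j) (i + j) = ldot (perp j) i := by
  simp only [ldot, perp, Prod.fst_add, Prod.snd_add]
  push_cast
  ring

lemma ldot_perp_add_right (i j : ℤ × ℤ) : ldot (perp i) (i + j) = -ldot (perp j) i := by
  simp only [ldot, perp, Prod.fst_add, Prod.snd_add]
  push_cast
  ring

lemma ldot_add_right_j (i j : ℤ × ℤ) : ldot j (i + j) = ldot i j + latSq j := by
  simp only [ldot, latSq, Prod.fst_add, Prod.snd_add]
  push_cast
  ring

lemma ldot_add_right_i (i j : ℤ × ℤ) : ldot i (i + j) = latSq i + ldot i j := by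
  simp only [ldot, latSq, Prod.fst_add, Prod.snd_add]
  push_cast
  ring

lemma diff_eq_ldot (i j : ℤ × ℤ) : latSq j - latSq i = ldot (j - i) (i + j) := by
  simp only [latSq, ldot, Prod.fst_sub, Prod.snd_sub, Prod.fst_add, Prod.snd_add]
  push_cast
  ring

lemma latSq_sub_le (i j : ℤ × ℤ) : latSq (j - i) ≤ 2 * (latSq i + latSq j) := by
  simp only [latSq, Prod.fst_sub, Prod.snd_sub]
  push_cast
  nlinarith [sq_nonneg ((j.1:ℝ) + (i.1:ℝ)), sq_nonneg ((j.2:ℝ) + (i.2:ℝ))]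

/-! ### The exact closed form of `α_{j,i+j} + α_{i,i+j}` -/

lemma pair_algebra (c β d Li Lj Lk P Q R : ℝ) (hLk : Lk = Li + 2 * d + Lj)
    (hLk0 : Lk ≠ 0) (hR : R ≠ 0) :
    c * ((β * (d + Lj)) / Lk - β / 2) * P / R
      + c * ((-β) * (Li + d) / Lk - (-β) / 2) * Q / R
      = c * (β * (Lj - Li) / (2 * Lk)) * (P + Q) / R := by
  field_simp
  rw [hLk]
  ring

lemma acoef_pair (a s : ℝ) (i j : ℤ × ℤ) (h0 : latSq (i + j) ≠ 0) :
    acoef a s j (i + j) + acoef a s i (i + j)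
      = (1 / (2 * π)) * (ldot (perp j) i * (latSq j - latSq i) / (2 * latSq (i + j)))
          * ((1 + a ^ 2 * latSq i) ^ s + (1 + a ^ 2 * latSq j) ^ s)
          / (1 + a ^ 2 * latSq (i + j)) ^ s := by
  have hR : (1 + a ^ 2 * latSq (i + j)) ^ s ≠ 0 := by
    have h1 : (0:ℝ) < 1 + a ^ 2 * latSq (i + j) := by
      have := latSq_nonneg (i + j)
      nlinarith [sq_nonneg a]
    exact (Real.rpow_pos_of_pos h1 s).ne'
  unfold acoef
  rw [add_sub_cancel_right, add_sub_cancel_left, ldot_perp_add_left, ldot_perp_add_right,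
    ldot_add_right_j, ldot_add_right_i]
  exact pair_algebra (1 / (2 * π)) (ldot (perp j) i) (ldot i j) (latSq i) (latSq j)
    (latSq (i + j)) _ _ _ (latSq_add i j) h0 hR

/-! ### Summability of `∑ latSq m ^ (-p)` over the lattice -/

lemma summable_one_add_sq (p : ℝ) (hp : 1 < p) :
    Summable (fun n : ℤ => ((1:ℝ) + (n:ℝ) ^ 2) ^ (-(p / 2))) := by
  have hp0 : 0 < p := one_pos.trans hp
  have hh : Summable (fun n : ℤ => if n = 0 then (1:ℝ) else 0) :=
    summable_of_ne_finset_zero (s := {0}) (fun b hb => if_neg (by simpa using hb))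
  refine Summable.of_nonneg_of_le (fun n => Real.rpow_nonneg (by positivity) _) ?_
    ((Real.summable_abs_int_rpow hp).add hh)
  intro n
  by_cases hn : n = 0
  · subst hn
    simp [Real.zero_rpow (by linarith : -p ≠ 0), Real.one_rpow]
  · have hne : ((n:ℝ)) ≠ 0 := by exact_mod_cast hn
    have h1 : |(n:ℝ)| ^ (-p) = ((n:ℝ) ^ 2) ^ (-(p / 2)) := by
      rw [← sq_abs, ← Real.rpow_natCast |(n:ℝ)| 2, ← Real.rpow_mul (abs_nonneg _)]
      norm_num
      rw [mul_div_cancel₀]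
      norm_num
    have h2 : ((1:ℝ) + (n:ℝ) ^ 2) ^ (-(p / 2)) ≤ ((n:ℝ) ^ 2) ^ (-(p / 2)) :=
      Real.rpow_le_rpow_of_nonpos (by positivity) (by nlinarith) (by linarith)
    simp only [if_neg hn, add_zero]
    rw [h1]
    exact h2

lemma summable_latSq_rpow (p : ℝ) (hp : 1 < p) :
    Summable (fun m : ℤ × ℤ => latSq m ^ (-p)) := by
  have hp0 : 0 < p := one_pos.trans hp
  have hf := summable_one_add_sq p hp
  have hprod : Summable (fun m : ℤ × ℤ =>
      (2:ℝ) ^ p * (((1:ℝ) + (m.1:ℝ) ^ 2) ^ (-(p / 2)) * ((1:ℝ) + (m.2:ℝ) ^ 2) ^ (-(p / 2)))) :=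
    (hf.mul_of_nonneg hf (fun n => Real.rpow_nonneg (by positivity) _)
      (fun n => Real.rpow_nonneg (by positivity) _)).mul_left _
  refine Summable.of_nonneg_of_le (fun m => Real.rpow_nonneg (latSq_nonneg m) _) ?_ hprod
  intro m
  by_cases hm : m = 0
  · subst hm
    have : latSq 0 = 0 := by simp [latSq]
    rw [this, Real.zero_rpow (by linarith : -p ≠ 0)]
    positivity
  · set L := latSq m with hL
    set x := ((m.1:ℝ)) ^ 2
    set y := ((m.2:ℝ)) ^ 2
    have hx : 0 ≤ x := by positivity
    have hy : 0 ≤ y := by positivity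
    have hL1 : 1 ≤ L := one_le_latSq hm
    have hLxy : L = x + y := rfl
    have hLpos : 0 < L := by linarith
    have hB : ((1 + x) * (1 + y)) ≤ (2 * L) ^ 2 := by nlinarith [mul_nonneg hx hy]
    have hBpos : (0:ℝ) < (1 + x) * (1 + y) := by positivity
    have hmain : ((1 + x) * (1 + y)) ^ (p / 2) ≤ 2 ^ p * L ^ p := by
      calc ((1 + x) * (1 + y)) ^ (p / 2) ≤ ((2 * L) ^ 2) ^ (p / 2) :=
            Real.rpow_le_rpow hBpos.le hB (by positivity)
        _ = (2 * L) ^ p := by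
            rw [← Real.rpow_natCast (2 * L) 2, ← Real.rpow_mul (by positivity)]
            norm_num
            rw [mul_div_cancel₀]
            norm_num
        _ = 2 ^ p * L ^ p := Real.mul_rpow (by norm_num) hLpos.le
    have hsplit : ((1 + x) * (1 + y)) ^ (-(p / 2))
        = (1 + x) ^ (-(p / 2)) * (1 + y) ^ (-(p / 2)) :=
      Real.mul_rpow (by positivity) (by positivity)
    rw [← hsplit]
    have h1 : L ^ (-p) = (L ^ p)⁻¹ := Real.rpow_neg hLpos.le p
    have h2 : ((1 + x) * (1 + y)) ^ (-(p / 2)) = (((1 + x) * (1 + y)) ^ (p / 2))⁻¹ :=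
      Real.rpow_neg hBpos.le _
    rw [h1, h2]
    rw [← one_div, ← one_div, mul_one_div, div_le_div_iff₀ (by positivity) (by positivity)]
    nlinarith [hmain, Real.rpow_pos_of_pos hLpos p, Real.rpow_pos_of_pos hBpos (p / 2),
      Real.rpow_pos_of_pos (by norm_num : (0:ℝ) < 2) p]

/-! ### The main pointwise estimate -/

/-- The decay exponent used for the dominating series. -/
def pexp (s α : ℝ) : ℝ := min (1 + 2 * s) (α - 1)

/-- The constant in the pointwise estimate. -/
def C0 (e s α : ℝ) : ℝ := e ^ (-(2 * s)) + ((4:ℝ) ^ (α - 2) + (4:ℝ) ^ (2 * s) * e ^ (-(2 * s)))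

lemma one_lt_pexp {s α : ℝ} (hs : 0 < s) (hα : 2 < α) : 1 < pexp s α := by
  unfold pexp
  apply lt_min <;> linarith

lemma core {s α e Li Lj Lk : ℝ} (hs : 0 < s) (hα : 2 < α) (he : 0 < e)
    (hLi : 1 ≤ Li) (hLj : 1 ≤ Lj) (hLk : 1 ≤ Lk) (hcmp : Lj ≤ 2 * (Lk + Li)) :
    Lk ^ (-α) * (1 / (Lj * (1 + e * Lj) ^ (2 * s)) + 1 / (Lj * (1 + e * Li) ^ (2 * s)))
      ≤ C0 e s α * (Lk ^ (-(2:ℝ)) * Lj ^ (-(pexp s α))) := by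
  have hLi0 : (0:ℝ) < Li := by linarith
  have hLj0 : (0:ℝ) < Lj := by linarith
  have hLk0 : (0:ℝ) < Lk := by linarith
  have hAi0 : (0:ℝ) < 1 + e * Li := by nlinarith
  have hAj0 : (0:ℝ) < 1 + e * Lj := by nlinarith
  have hp1 : pexp s α ≤ 1 + 2 * s := min_le_left _ _
  have hp2 : pexp s α ≤ α - 1 := min_le_right _ _
  have hX0 : 0 ≤ Lk ^ (-(2:ℝ)) * Lj ^ (-(pexp s α)) :=
    mul_nonneg (Real.rpow_nonneg hLk0.le _) (Real.rpow_nonneg hLj0.le _)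
  have hLkle : Lk ^ (-α) ≤ Lk ^ (-(2:ℝ)) :=
    Real.rpow_le_rpow_of_exponent_le hLk (by linarith)
  have hLknn : 0 ≤ Lk ^ (-α) := Real.rpow_nonneg hLk0.le _
  have key1 : 1 / (Lj * (1 + e * Lj) ^ (2 * s)) ≤ e ^ (-(2 * s)) * Lj ^ (-(pexp s α)) := by
    have h1 : e ^ (2 * s) * Lj ^ (1 + 2 * s) ≤ Lj * (1 + e * Lj) ^ (2 * s) := by
      have h2 : (e * Lj) ^ (2 * s) ≤ (1 + e * Lj) ^ (2 * s) :=
        Real.rpow_le_rpow (by positivity) (by linarith) (by linarith)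
      rw [Real.mul_rpow he.le hLj0.le] at h2
      have h3 : Lj ^ (1 + 2 * s) = Lj * Lj ^ (2 * s) := by
        rw [Real.rpow_add hLj0, Real.rpow_one]
      rw [h3]
      calc e ^ (2 * s) * (Lj * Lj ^ (2 * s)) = Lj * (e ^ (2 * s) * Lj ^ (2 * s)) := by ring
        _ ≤ Lj * (1 + e * Lj) ^ (2 * s) := by
            exact mul_le_mul_of_nonneg_left h2 hLj0.le
    have h4 : 1 / (Lj * (1 + e * Lj) ^ (2 * s)) ≤ 1 / (e ^ (2 * s) * Lj ^ (1 + 2 * s)) :=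
      one_div_le_one_div_of_le (by positivity) h1
    have h5 : 1 / (e ^ (2 * s) * Lj ^ (1 + 2 * s)) = e ^ (-(2 * s)) * Lj ^ (-(1 + 2 * s)) := by
      rw [Real.rpow_neg he.le, Real.rpow_neg hLj0.le, one_div, mul_inv]
    have h6 : Lj ^ (-(1 + 2 * s)) ≤ Lj ^ (-(pexp s α)) :=
      Real.rpow_le_rpow_of_exponent_le hLj (by linarith)
    calc 1 / (Lj * (1 + e * Lj) ^ (2 * s)) ≤ e ^ (-(2 * s)) * Lj ^ (-(1 + 2 * s)) := by
          rw [← h5]; exact h4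
      _ ≤ e ^ (-(2 * s)) * Lj ^ (-(pexp s α)) :=
          mul_le_mul_of_nonneg_left h6 (Real.rpow_nonneg he.le _)
  have key2 : Lk ^ (-α) * (1 / (Lj * (1 + e * Li) ^ (2 * s)))
      ≤ ((4:ℝ) ^ (α - 2) + (4:ℝ) ^ (2 * s) * e ^ (-(2 * s)))
        * (Lk ^ (-(2:ℝ)) * Lj ^ (-(pexp s α))) := by
    have h4nn : (0:ℝ) ≤ (4:ℝ) ^ (α - 2) := Real.rpow_nonneg (by norm_num) _
    have h4nn' : (0:ℝ) ≤ (4:ℝ) ^ (2 * s) * e ^ (-(2 * s)) :=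
      mul_nonneg (Real.rpow_nonneg (by norm_num) _) (Real.rpow_nonneg he.le _)
    rcases le_total Li Lk with h | h
    · have h4 : Lj ≤ 4 * Lk := by linarith
      have hsplit : Lk ^ (-α) = Lk ^ (-(2:ℝ)) * Lk ^ (2 - α) := by
        rw [← Real.rpow_add hLk0]; ring_nf
      have hLe : Lk ^ (2 - α) ≤ (Lj / 4) ^ (2 - α) :=
        Real.rpow_le_rpow_of_nonpos (by positivity) (by linarith) (by linarith)
      have heq : (Lj / 4) ^ (2 - α) = (4:ℝ) ^ (α - 2) * Lj ^ (2 - α) := by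
        rw [Real.div_rpow hLj0.le (by norm_num), div_eq_mul_inv,
          ← Real.rpow_neg (by norm_num : (0:ℝ) ≤ 4)]
        rw [show -(2 - α) = α - 2 by ring]
        ring
      have hA1 : (1:ℝ) ≤ (1 + e * Li) ^ (2 * s) := Real.one_le_rpow (by nlinarith) (by linarith)
      have hfrac : 1 / (Lj * (1 + e * Li) ^ (2 * s)) ≤ 1 / Lj := by
        apply one_div_le_one_div_of_le hLj0
        nlinarith
      have hLjp : Lj ^ (2 - α) * (1 / Lj) = Lj ^ (1 - α) := by
        rw [mul_one_div, show Lj ^ (2 - α) / Lj = Lj ^ (2 - α) / Lj ^ (1:ℝ) from by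
          rw [Real.rpow_one], ← Real.rpow_sub hLj0]
        ring_nf
      have hLjp2 : Lj ^ (1 - α) ≤ Lj ^ (-(pexp s α)) :=
        Real.rpow_le_rpow_of_exponent_le hLj (by linarith)
      calc Lk ^ (-α) * (1 / (Lj * (1 + e * Li) ^ (2 * s)))
          ≤ (Lk ^ (-(2:ℝ)) * ((4:ℝ) ^ (α - 2) * Lj ^ (2 - α))) * (1 / Lj) := by
            rw [hsplit]
            apply mul_le_mul _ hfrac (by positivity) (by positivity)
            apply mul_le_mul_of_nonneg_left _ (Real.rpow_nonneg hLk0.le _)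
            rw [← heq]; exact hLe
        _ = (4:ℝ) ^ (α - 2) * (Lk ^ (-(2:ℝ)) * (Lj ^ (2 - α) * (1 / Lj))) := by ring
        _ = (4:ℝ) ^ (α - 2) * (Lk ^ (-(2:ℝ)) * Lj ^ (1 - α)) := by rw [hLjp]
        _ ≤ (4:ℝ) ^ (α - 2) * (Lk ^ (-(2:ℝ)) * Lj ^ (-(pexp s α))) := by
            apply mul_le_mul_of_nonneg_left _ h4nn
            exact mul_le_mul_of_nonneg_left hLjp2 (Real.rpow_nonneg hLk0.le _)
        _ ≤ ((4:ℝ) ^ (α - 2) + (4:ℝ) ^ (2 * s) * e ^ (-(2 * s)))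
              * (Lk ^ (-(2:ℝ)) * Lj ^ (-(pexp s α))) := by
            rw [add_mul]; linarith [mul_nonneg h4nn' hX0]
    · have h4 : Lj ≤ 4 * Li := by linarith
      have hAA : (1 + e * Lj) ≤ 4 * (1 + e * Li) := by nlinarith
      have hrp : (1 + e * Lj) ^ (2 * s) ≤ (4:ℝ) ^ (2 * s) * (1 + e * Li) ^ (2 * s) := by
        calc (1 + e * Lj) ^ (2 * s) ≤ (4 * (1 + e * Li)) ^ (2 * s) :=
              Real.rpow_le_rpow hAj0.le hAA (by linarith)
          _ = (4:ℝ) ^ (2 * s) * (1 + e * Li) ^ (2 * s) :=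
              Real.mul_rpow (by norm_num) hAi0.le
      have hstep : 1 / (Lj * (1 + e * Li) ^ (2 * s))
          ≤ (4:ℝ) ^ (2 * s) * (1 / (Lj * (1 + e * Lj) ^ (2 * s))) := by
        rw [mul_one_div, div_le_div_iff₀ (by positivity) (by positivity)]
        nlinarith [Real.rpow_pos_of_pos hAi0 (2 * s), Real.rpow_pos_of_pos hAj0 (2 * s),
          mul_le_mul_of_nonneg_left hrp hLj0.le]
      calc Lk ^ (-α) * (1 / (Lj * (1 + e * Li) ^ (2 * s)))
          ≤ Lk ^ (-(2:ℝ)) * ((4:ℝ) ^ (2 * s) * (e ^ (-(2 * s)) * Lj ^ (-(pexp s α)))) := by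
            apply mul_le_mul hLkle _ (by positivity) (Real.rpow_nonneg hLk0.le _)
            calc 1 / (Lj * (1 + e * Li) ^ (2 * s))
                ≤ (4:ℝ) ^ (2 * s) * (1 / (Lj * (1 + e * Lj) ^ (2 * s))) := hstep
              _ ≤ (4:ℝ) ^ (2 * s) * (e ^ (-(2 * s)) * Lj ^ (-(pexp s α))) :=
                  mul_le_mul_of_nonneg_left key1 (Real.rpow_nonneg (by norm_num) _)
        _ = ((4:ℝ) ^ (2 * s) * e ^ (-(2 * s))) * (Lk ^ (-(2:ℝ)) * Lj ^ (-(pexp s α))) := by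
            ring
        _ ≤ ((4:ℝ) ^ (α - 2) + (4:ℝ) ^ (2 * s) * e ^ (-(2 * s)))
              * (Lk ^ (-(2:ℝ)) * Lj ^ (-(pexp s α))) := by
            rw [add_mul]; linarith [mul_nonneg h4nn hX0]
  have t1 : Lk ^ (-α) * (1 / (Lj * (1 + e * Lj) ^ (2 * s)))
      ≤ e ^ (-(2 * s)) * (Lk ^ (-(2:ℝ)) * Lj ^ (-(pexp s α))) := by
    calc Lk ^ (-α) * (1 / (Lj * (1 + e * Lj) ^ (2 * s)))
        ≤ Lk ^ (-(2:ℝ)) * (e ^ (-(2 * s)) * Lj ^ (-(pexp s α))) :=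
          mul_le_mul hLkle key1 (by positivity) (Real.rpow_nonneg hLk0.le _)
      _ = e ^ (-(2 * s)) * (Lk ^ (-(2:ℝ)) * Lj ^ (-(pexp s α))) := by ring
  unfold C0
  calc Lk ^ (-α) * (1 / (Lj * (1 + e * Lj) ^ (2 * s)) + 1 / (Lj * (1 + e * Li) ^ (2 * s)))
      = Lk ^ (-α) * (1 / (Lj * (1 + e * Lj) ^ (2 * s)))
        + Lk ^ (-α) * (1 / (Lj * (1 + e * Li) ^ (2 * s))) := by ring
    _ ≤ e ^ (-(2 * s)) * (Lk ^ (-(2:ℝ)) * Lj ^ (-(pexp s α)))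
        + ((4:ℝ) ^ (α - 2) + (4:ℝ) ^ (2 * s) * e ^ (-(2 * s)))
          * (Lk ^ (-(2:ℝ)) * Lj ^ (-(pexp s α))) := add_le_add t1 key2
    _ = (e ^ (-(2 * s)) + ((4:ℝ) ^ (α - 2) + (4:ℝ) ^ (2 * s) * e ^ (-(2 * s))))
          * (Lk ^ (-(2:ℝ)) * Lj ^ (-(pexp s α))) := by ring

set_option maxHeartbeats 1000000 in
lemma bridge {π2 s α e Li Lj Lk β : ℝ}
    (hs : 0 < s) (hα : 2 < α) (he : 0 < e)
    (hLi : 1 ≤ Li) (hLj : 1 ≤ Lj) (hLk : 1 ≤ Lk)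
    (hβ : β ^ 2 ≤ Li * Lj) (hD : (Lj - Li) ^ 2 ≤ 2 * (Li + Lj) * Lk)
    (hc1 : Li ≤ 2 * (Lk + Lj)) (hc2 : Lj ≤ 2 * (Lk + Li)) :
    Lk ^ (1 - α) * (1 + e * Lk) ^ ((1 - α) * s)
        / (Li ^ 2 * Lj ^ 2 * (1 + e * Li) ^ (2 * s) * (1 + e * Lj) ^ (2 * s))
        * (π2 * (β * (Lj - Li) / (2 * Lk)) * ((1 + e * Li) ^ s + (1 + e * Lj) ^ s)
            / (1 + e * Lk) ^ s) ^ 2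
      ≤ π2 ^ 2 * C0 e s α
          * (Li ^ (-(pexp s α)) * Lk ^ (-(2:ℝ)) + Lj ^ (-(pexp s α)) * Lk ^ (-(2:ℝ))) := by
  have hLi0 : (0:ℝ) < Li := by linarith
  have hLj0 : (0:ℝ) < Lj := by linarith
  have hLk0 : (0:ℝ) < Lk := by linarith
  have hAi0 : (0:ℝ) < 1 + e * Li := by nlinarith
  have hAj0 : (0:ℝ) < 1 + e * Lj := by nlinarith
  have hAk0 : (0:ℝ) < 1 + e * Lk := by nlinarith
  have hAk1 : (1:ℝ) ≤ 1 + e * Lk := by nlinarith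
  have hAi2s : (0:ℝ) < (1 + e * Li) ^ (2 * s) := Real.rpow_pos_of_pos hAi0 _
  have hAj2s : (0:ℝ) < (1 + e * Lj) ^ (2 * s) := Real.rpow_pos_of_pos hAj0 _
  have hAk2s : (0:ℝ) < (1 + e * Lk) ^ (2 * s) := Real.rpow_pos_of_pos hAk0 _
  have hAks : (0:ℝ) < (1 + e * Lk) ^ s := Real.rpow_pos_of_pos hAk0 _
  have hAis : (0:ℝ) < (1 + e * Li) ^ s := Real.rpow_pos_of_pos hAi0 _
  have hAjs : (0:ℝ) < (1 + e * Lj) ^ s := Real.rpow_pos_of_pos hAj0 _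
  have hW0 : (0:ℝ) ≤ Lk ^ (1 - α) * (1 + e * Lk) ^ ((1 - α) * s)
      / (Li ^ 2 * Lj ^ 2 * (1 + e * Li) ^ (2 * s) * (1 + e * Lj) ^ (2 * s)) := by
    apply div_nonneg
    · exact mul_nonneg (Real.rpow_nonneg hLk0.le _) (Real.rpow_nonneg hAk0.le _)
    · positivity
  have hdbl : ∀ x : ℝ, 0 < x → x ^ (2 * s) = x ^ s * x ^ s := by
    intro x hx
    rw [show 2 * s = s + s by ring, Real.rpow_add hx]
  have hsq : (π2 * (β * (Lj - Li) / (2 * Lk)) * ((1 + e * Li) ^ s + (1 + e * Lj) ^ s)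
      / (1 + e * Lk) ^ s) ^ 2
      = π2 ^ 2 * (β ^ 2 * ((Lj - Li) ^ 2 * ((1 + e * Li) ^ s + (1 + e * Lj) ^ s) ^ 2))
          / (4 * Lk ^ 2 * (1 + e * Lk) ^ (2 * s)) := by
    rw [hdbl _ hAk0]
    field_simp
    ring
  have hPQ : ((1 + e * Li) ^ s + (1 + e * Lj) ^ s) ^ 2
      ≤ 2 * ((1 + e * Li) ^ (2 * s) + (1 + e * Lj) ^ (2 * s)) := by
    rw [hdbl _ hAi0, hdbl _ hAj0]
    nlinarith [sq_nonneg ((1 + e * Li) ^ s - (1 + e * Lj) ^ s)]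
  have hnum : β ^ 2 * ((Lj - Li) ^ 2 * ((1 + e * Li) ^ s + (1 + e * Lj) ^ s) ^ 2)
      ≤ (Li * Lj) * ((2 * (Li + Lj) * Lk)
          * (2 * ((1 + e * Li) ^ (2 * s) + (1 + e * Lj) ^ (2 * s)))) := by
    have h1 : (Lj - Li) ^ 2 * ((1 + e * Li) ^ s + (1 + e * Lj) ^ s) ^ 2
        ≤ (2 * (Li + Lj) * Lk) * (2 * ((1 + e * Li) ^ (2 * s) + (1 + e * Lj) ^ (2 * s))) :=
      mul_le_mul hD hPQ (sq_nonneg _) (by positivity)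
    exact mul_le_mul hβ h1 (mul_nonneg (sq_nonneg _) (sq_nonneg _)) (by positivity)
  have hF1 : Lk ^ (1 - α) * (1 + e * Lk) ^ ((1 - α) * s)
      / (Li ^ 2 * Lj ^ 2 * (1 + e * Li) ^ (2 * s) * (1 + e * Lj) ^ (2 * s))
      * (π2 * (β * (Lj - Li) / (2 * Lk)) * ((1 + e * Li) ^ s + (1 + e * Lj) ^ s)
          / (1 + e * Lk) ^ s) ^ 2
      ≤ Lk ^ (1 - α) * (1 + e * Lk) ^ ((1 - α) * s)
        / (Li ^ 2 * Lj ^ 2 * (1 + e * Li) ^ (2 * s) * (1 + e * Lj) ^ (2 * s))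
        * (π2 ^ 2 * ((Li * Lj) * ((2 * (Li + Lj) * Lk)
            * (2 * ((1 + e * Li) ^ (2 * s) + (1 + e * Lj) ^ (2 * s)))))
            / (4 * Lk ^ 2 * (1 + e * Lk) ^ (2 * s))) := by
    apply mul_le_mul_of_nonneg_left _ hW0
    rw [hsq]
    apply div_le_div_of_nonneg_right _ (by positivity)
    exact mul_le_mul_of_nonneg_left hnum (sq_nonneg π2)
  have hEq : Lk ^ (1 - α) * (1 + e * Lk) ^ ((1 - α) * s)
      / (Li ^ 2 * Lj ^ 2 * (1 + e * Li) ^ (2 * s) * (1 + e * Lj) ^ (2 * s))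
      * (π2 ^ 2 * ((Li * Lj) * ((2 * (Li + Lj) * Lk)
          * (2 * ((1 + e * Li) ^ (2 * s) + (1 + e * Lj) ^ (2 * s)))))
          / (4 * Lk ^ 2 * (1 + e * Lk) ^ (2 * s)))
      = π2 ^ 2 * ((Lk ^ (1 - α) * Lk / Lk ^ 2)
          * ((1 + e * Lk) ^ ((1 - α) * s) / (1 + e * Lk) ^ (2 * s))
          * ((Li + Lj) * ((1 + e * Li) ^ (2 * s) + (1 + e * Lj) ^ (2 * s))
              / (Li * Lj * (1 + e * Li) ^ (2 * s) * (1 + e * Lj) ^ (2 * s)))) := by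
    field_simp
    ring
  have e1 : Lk ^ (1 - α) * Lk / Lk ^ 2 = Lk ^ (-α) := by
    have h1 : Lk ^ (1 - α) = Lk ^ (-α) * Lk := by
      rw [show (1:ℝ) - α = -α + 1 by ring, Real.rpow_add hLk0, Real.rpow_one]
    rw [h1]
    field_simp
  have e2 : (1 + e * Lk) ^ ((1 - α) * s) / (1 + e * Lk) ^ (2 * s)
      = (1 + e * Lk) ^ ((1 - α) * s - 2 * s) := (Real.rpow_sub hAk0 _ _).symm
  have e2b : (1 + e * Lk) ^ ((1 - α) * s - 2 * s) ≤ 1 :=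
    Real.rpow_le_one_of_one_le_of_nonpos hAk1 (by nlinarith)
  have e3 : (Li + Lj) * ((1 + e * Li) ^ (2 * s) + (1 + e * Lj) ^ (2 * s))
      / (Li * Lj * (1 + e * Li) ^ (2 * s) * (1 + e * Lj) ^ (2 * s))
      = (1 / (Lj * (1 + e * Lj) ^ (2 * s)) + 1 / (Lj * (1 + e * Li) ^ (2 * s)))
        + (1 / (Li * (1 + e * Li) ^ (2 * s)) + 1 / (Li * (1 + e * Lj) ^ (2 * s))) := by
    field_simp
    ring
  have hBR0 : 0 ≤ (1 / (Lj * (1 + e * Lj) ^ (2 * s)) + 1 / (Lj * (1 + e * Li) ^ (2 * s)))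
      + (1 / (Li * (1 + e * Li) ^ (2 * s)) + 1 / (Li * (1 + e * Lj) ^ (2 * s))) := by
    positivity
  have hcore1 := core hs hα he hLi hLj hLk hc2
  have hcore2 := core hs hα he hLj hLi hLk hc1
  calc Lk ^ (1 - α) * (1 + e * Lk) ^ ((1 - α) * s)
        / (Li ^ 2 * Lj ^ 2 * (1 + e * Li) ^ (2 * s) * (1 + e * Lj) ^ (2 * s))
        * (π2 * (β * (Lj - Li) / (2 * Lk)) * ((1 + e * Li) ^ s + (1 + e * Lj) ^ s)
            / (1 + e * Lk) ^ s) ^ 2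
      ≤ π2 ^ 2 * ((Lk ^ (-α)) * ((1 + e * Lk) ^ ((1 - α) * s - 2 * s))
          * (((1 / (Lj * (1 + e * Lj) ^ (2 * s)) + 1 / (Lj * (1 + e * Li) ^ (2 * s)))
            + (1 / (Li * (1 + e * Li) ^ (2 * s)) + 1 / (Li * (1 + e * Lj) ^ (2 * s)))))) := by
        rw [← e1, ← e2, ← e3]
        calc _ ≤ _ := hF1
          _ = _ := hEq
    _ ≤ π2 ^ 2 * ((Lk ^ (-α)) * 1
          * (((1 / (Lj * (1 + e * Lj) ^ (2 * s)) + 1 / (Lj * (1 + e * Li) ^ (2 * s)))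
            + (1 / (Li * (1 + e * Li) ^ (2 * s)) + 1 / (Li * (1 + e * Lj) ^ (2 * s)))))) := by
        apply mul_le_mul_of_nonneg_left _ (sq_nonneg π2)
        apply mul_le_mul_of_nonneg_right _ hBR0
        exact mul_le_mul_of_nonneg_left e2b (Real.rpow_nonneg hLk0.le _)
    _ = π2 ^ 2 * ((Lk ^ (-α)) * (1 / (Lj * (1 + e * Lj) ^ (2 * s))
            + 1 / (Lj * (1 + e * Li) ^ (2 * s)))
          + (Lk ^ (-α)) * (1 / (Li * (1 + e * Li) ^ (2 * s))
            + 1 / (Li * (1 + e * Lj) ^ (2 * s)))) := by ring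
    _ ≤ π2 ^ 2 * (C0 e s α * (Lk ^ (-(2:ℝ)) * Lj ^ (-(pexp s α)))
          + C0 e s α * (Lk ^ (-(2:ℝ)) * Li ^ (-(pexp s α)))) := by
        apply mul_le_mul_of_nonneg_left _ (sq_nonneg π2)
        exact add_le_add hcore1 hcore2
    _ = π2 ^ 2 * C0 e s α
          * (Li ^ (-(pexp s α)) * Lk ^ (-(2:ℝ)) + Lj ^ (-(pexp s α)) * Lk ^ (-(2:ℝ))) := by ring

set_option maxHeartbeats 1000000 in
lemma pointwise (a s α : ℝ) (ha : a ≠ 0) (hs : 0 < s) (hα : 2 < α)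
    (i j : ℤ × ℤ) (hi : i ≠ 0) (hj : j ≠ 0) (hk : i + j ≠ 0) :
    latSq (i + j) ^ (1 - α) * (1 + a ^ 2 * latSq (i + j)) ^ ((1 - α) * s)
        / (latSq i ^ 2 * latSq j ^ 2 * (1 + a ^ 2 * latSq i) ^ (2 * s)
            * (1 + a ^ 2 * latSq j) ^ (2 * s))
        * (acoef a s j (i + j) + acoef a s i (i + j)) ^ 2
      ≤ (1 / (2 * π)) ^ 2 * C0 (a ^ 2) s α
          * (latSq i ^ (-(pexp s α)) * latSq (i + j) ^ (-(2:ℝ))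
            + latSq j ^ (-(pexp s α)) * latSq (i + j) ^ (-(2:ℝ))) := by
  have hLi : 1 ≤ latSq i := one_le_latSq hi
  have hLj : 1 ≤ latSq j := one_le_latSq hj
  have hLk : 1 ≤ latSq (i + j) := one_le_latSq hk
  have he : (0:ℝ) < a ^ 2 := by positivity
  have hβ : (ldot (perp j) i) ^ 2 ≤ latSq i * latSq j := by
    have := ldot_sq_le (perp j) i
    rw [latSq_perp] at this
    linarith [this]
  have hD : (latSq j - latSq i) ^ 2 ≤ 2 * (latSq i + latSq j) * latSq (i + j) := by
    rw [diff_eq_ldot i j]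
    calc (ldot (j - i) (i + j)) ^ 2 ≤ latSq (j - i) * latSq (i + j) := ldot_sq_le _ _
      _ ≤ (2 * (latSq i + latSq j)) * latSq (i + j) :=
        mul_le_mul_of_nonneg_right (latSq_sub_le i j) (latSq_nonneg _)
      _ = 2 * (latSq i + latSq j) * latSq (i + j) := by ring
  have hc1 : latSq i ≤ 2 * (latSq (i + j) + latSq j) := by
    have h := latSq_sub_le j (i + j)
    rw [add_sub_cancel_right] at h
    linarith
  have hc2 : latSq j ≤ 2 * (latSq (i + j) + latSq i) := by
    have h := latSq_sub_le i (i + j)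
    rw [add_sub_cancel_left] at h
    linarith
  rw [acoef_pair a s i j (by linarith)]
  exact bridge hs hα he hLi hLj hLk hβ hD (by linarith) (by linarith)

/-! ### The main theorem -/

set_option maxHeartbeats 1000000 in
/-- For `α > 2` the series giving the squared Hilbert-Schmidt norm of `∇²B`,
`∑_{i,j} (i+j)^{2(1-α)}(1+a²(i+j)²)^{(1-α)s} (α_{j,i+j}+α_{i,i+j})²
  / (i⁴j⁴(1+a²i²)^{2s}(1+a²j²)^{2s})`, converges. -/
theorem secondDerivative_HS_series_summable (a s α : ℝ) (ha : a ≠ 0) (hs : 0 < s)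
    (hα : 2 < α) :
    Summable (fun q : {q : (ℤ × ℤ) × (ℤ × ℤ) //
        q.1 ≠ 0 ∧ q.2 ≠ 0 ∧ PosMode (q.1 + q.2)} =>
      latSq ((q : (ℤ × ℤ) × (ℤ × ℤ)).1 + (q : (ℤ × ℤ) × (ℤ × ℤ)).2) ^ (1 - α)
        * (1 + a ^ 2 * latSq ((q : (ℤ × ℤ) × (ℤ × ℤ)).1 + (q : (ℤ × ℤ) × (ℤ × ℤ)).2))
            ^ ((1 - α) * s)
        / (latSq (q : (ℤ × ℤ) × (ℤ × ℤ)).1 ^ 2 * latSq (q : (ℤ × ℤ) × (ℤ × ℤ)).2 ^ 2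
            * (1 + a ^ 2 * latSq (q : (ℤ × ℤ) × (ℤ × ℤ)).1) ^ (2 * s)
            * (1 + a ^ 2 * latSq (q : (ℤ × ℤ) × (ℤ × ℤ)).2) ^ (2 * s))
        * (acoef a s (q : (ℤ × ℤ) × (ℤ × ℤ)).2
              ((q : (ℤ × ℤ) × (ℤ × ℤ)).1 + (q : (ℤ × ℤ) × (ℤ × ℤ)).2)
            + acoef a s (q : (ℤ × ℤ) × (ℤ × ℤ)).1
              ((q : (ℤ × ℤ) × (ℤ × ℤ)).1 + (q : (ℤ × ℤ) × (ℤ × ℤ)).2)) ^ 2) := by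
  have hp : 1 < pexp s α := one_lt_pexp hs hα
  have hH : Summable (fun r : (ℤ × ℤ) × (ℤ × ℤ) =>
      latSq r.1 ^ (-(pexp s α)) * latSq r.2 ^ (-(2:ℝ))) :=
    (summable_latSq_rpow _ hp).mul_of_nonneg (summable_latSq_rpow 2 one_lt_two)
      (fun m => Real.rpow_nonneg (latSq_nonneg m) _)
      (fun m => Real.rpow_nonneg (latSq_nonneg m) _)
  have hinj1 : Function.Injective
      (fun q : {q : (ℤ × ℤ) × (ℤ × ℤ) // q.1 ≠ 0 ∧ q.2 ≠ 0 ∧ PosMode (q.1 + q.2)} =>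
        (q.val.1, q.val.1 + q.val.2)) := by
    intro q r h
    simp only [Prod.mk.injEq] at h
    obtain ⟨h1, h2⟩ := h
    rw [h1, add_right_inj] at h2
    exact Subtype.ext (Prod.ext h1 h2)
  have hinj2 : Function.Injective
      (fun q : {q : (ℤ × ℤ) × (ℤ × ℤ) // q.1 ≠ 0 ∧ q.2 ≠ 0 ∧ PosMode (q.1 + q.2)} =>
        (q.val.2, q.val.1 + q.val.2)) := by
    intro q r h
    simp only [Prod.mk.injEq] at h
    obtain ⟨h1, h2⟩ := h
    rw [h1, add_left_inj] at h2
    exact Subtype.ext (Prod.ext h2 h1)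
  have hs1 : Summable (fun q : {q : (ℤ × ℤ) × (ℤ × ℤ) //
      q.1 ≠ 0 ∧ q.2 ≠ 0 ∧ PosMode (q.1 + q.2)} =>
      latSq q.val.1 ^ (-(pexp s α)) * latSq (q.val.1 + q.val.2) ^ (-(2:ℝ))) :=
    (hH.comp_injective hinj1).congr (fun q => rfl)
  have hs2 : Summable (fun q : {q : (ℤ × ℤ) × (ℤ × ℤ) //
      q.1 ≠ 0 ∧ q.2 ≠ 0 ∧ PosMode (q.1 + q.2)} =>
      latSq q.val.2 ^ (-(pexp s α)) * latSq (q.val.1 + q.val.2) ^ (-(2:ℝ))) :=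
    (hH.comp_injective hinj2).congr (fun q => rfl)
  have hg : Summable (fun q : {q : (ℤ × ℤ) × (ℤ × ℤ) //
      q.1 ≠ 0 ∧ q.2 ≠ 0 ∧ PosMode (q.1 + q.2)} =>
      (1 / (2 * π)) ^ 2 * C0 (a ^ 2) s α
      * (latSq q.val.1 ^ (-(pexp s α)) * latSq (q.val.1 + q.val.2) ^ (-(2:ℝ))
        + latSq q.val.2 ^ (-(pexp s α)) * latSq (q.val.1 + q.val.2) ^ (-(2:ℝ)))) :=
    (hs1.add hs2).mul_left _
  apply Summable.of_nonneg_of_le _ _ hg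
  · rintro ⟨⟨i, j⟩, hi, hj, hpm⟩
    have h1 : (0:ℝ) ≤ 1 + a ^ 2 * latSq (i + j) := by
      have := latSq_nonneg (i + j); nlinarith [sq_nonneg a]
    have h2 : (0:ℝ) ≤ 1 + a ^ 2 * latSq i := by
      have := latSq_nonneg i; nlinarith [sq_nonneg a]
    have h3 : (0:ℝ) ≤ 1 + a ^ 2 * latSq j := by
      have := latSq_nonneg j; nlinarith [sq_nonneg a]
    apply mul_nonneg
    apply div_nonneg
    · exact mul_nonneg (Real.rpow_nonneg (latSq_nonneg _) _) (Real.rpow_nonneg h1 _)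
    · exact mul_nonneg (mul_nonneg (mul_nonneg (sq_nonneg _) (sq_nonneg _))
        (Real.rpow_nonneg h2 _)) (Real.rpow_nonneg h3 _)
    · exact sq_nonneg _
  · rintro ⟨⟨i, j⟩, hi, hj, hpm⟩
    exact pointwise a s α ha hs hα i j hi hj (posMode_ne_zero hpm)
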